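/- The map Ψ : ℝ² → ℝ² defined by Ψ(x, y) = (−e^{−x}, −e^{−x−y}) is a real-analytic diffeomorphism from ℝ² onto the open quadrant {(u, v) ∈ ℝ² : u < 0, v < 0}, and at every point p = (x, y) its derivative satisfies DΨ(p)(e^{x}·(e₁ − e₂)) = e₁ and DΨ(p)(e^{x+y}·e₂) = e₂. In other words, Ψ provides canonical coordinates in which the two commuting vector fields e^{x}(∂_x − ∂_y) and e^{x+y}∂_y become the coordinate vector fields ∂_u and ∂_v. -/

import Mathlib

set_option maxHeartbeats 1000000
set_option synthInstance.maxHeartbeats 400000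

noncomputable section

open Real

/-- Real `log` is real-analytic at positive points. -/
lemma analyticAt_rlog_aux {t : ℝ} (ht : 0 < t) : AnalyticAt ℝ Real.log t := by
  have hslit : (t : ℂ) ∈ Complex.slitPlane := by
    simp [Complex.mem_slitPlane_iff, ht]
  have hlog : AnalyticAt ℝ Complex.log (t : ℂ) :=
    (analyticAt_clog hslit).restrictScalars
  have h1 : AnalyticAt ℝ (fun x : ℝ => (Complex.log x).re) t :=
    (Complex.reCLM.analyticAt _).comp (hlog.comp (Complex.ofRealCLM.analyticAt t))
  apply h1.congr
  filter_upwards [eventually_gt_nhds ht] with x hx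
  rw [← Complex.ofReal_log hx.le, Complex.ofReal_re]

/-- The derivative of the first component of `Ψ`. -/
lemma hasDerivAt_comp0 (p : Fin 2 → ℝ) :
    HasFDerivAt (fun q : Fin 2 → ℝ => -(Real.exp (-(q 0))))
      (Real.exp (-(p 0)) • (ContinuousLinearMap.proj 0 : (Fin 2 → ℝ) →L[ℝ] ℝ)) p := by
  have h : HasDerivAt (fun t : ℝ => -(Real.exp (-t))) (Real.exp (-(p 0))) (p 0) := by
    have := ((Real.hasDerivAt_exp (-(p 0))).comp (p 0) (hasDerivAt_neg (p 0))).neg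
    exact this.congr_deriv (by simp)
  have := h.comp_hasFDerivAt p
    ((ContinuousLinearMap.proj 0 : (Fin 2 → ℝ) →L[ℝ] ℝ).hasFDerivAt)
  exact this

/-- The derivative of the second component of `Ψ`. -/
lemma hasDerivAt_comp1 (p : Fin 2 → ℝ) :
    HasFDerivAt (fun q : Fin 2 → ℝ => -(Real.exp (-(q 0 + q 1))))
      (Real.exp (-(p 0 + p 1)) •
        ((ContinuousLinearMap.proj 0 : (Fin 2 → ℝ) →L[ℝ] ℝ) + ContinuousLinearMap.proj 1)) p := by
  have h : HasDerivAt (fun t : ℝ => -(Real.exp (-t))) (Real.exp (-(p 0 + p 1))) (p 0 + p 1) := by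
    have := ((Real.hasDerivAt_exp (-(p 0 + p 1))).comp (p 0 + p 1)
      (hasDerivAt_neg (p 0 + p 1))).neg
    exact this.congr_deriv (by simp)
  have hsum : HasFDerivAt (fun q : Fin 2 → ℝ => q 0 + q 1)
      ((ContinuousLinearMap.proj 0 : (Fin 2 → ℝ) →L[ℝ] ℝ) + ContinuousLinearMap.proj 1) p :=
    ((ContinuousLinearMap.proj 0 : (Fin 2 → ℝ) →L[ℝ] ℝ).hasFDerivAt).add
      ((ContinuousLinearMap.proj 1 : (Fin 2 → ℝ) →L[ℝ] ℝ).hasFDerivAt)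
  have := h.comp_hasFDerivAt p hsum
  exact this

/-- The total derivative of `Ψ`. -/
def Lmap (p : Fin 2 → ℝ) : (Fin 2 → ℝ) →L[ℝ] (Fin 2 → ℝ) :=
  ContinuousLinearMap.pi
    ![Real.exp (-(p 0)) • (ContinuousLinearMap.proj 0 : (Fin 2 → ℝ) →L[ℝ] ℝ),
      Real.exp (-(p 0 + p 1)) •
        ((ContinuousLinearMap.proj 0 : (Fin 2 → ℝ) →L[ℝ] ℝ) + ContinuousLinearMap.proj 1)]

lemma hasFDerivAt_Psi (p : Fin 2 → ℝ) :
    HasFDerivAt (fun q : Fin 2 → ℝ => ![-(Real.exp (-(q 0))), -(Real.exp (-(q 0 + q 1)))])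
      (Lmap p) p := by
  apply hasFDerivAt_pi''
  intro i
  fin_cases i
  · exact hasDerivAt_comp0 p
  · exact hasDerivAt_comp1 p

/-- The map `Ψ(x,y) = (−e^{−x}, −e^{−x−y})` is a real-analytic diffeomorphism of `ℝ²` onto
the open quadrant `{u < 0, v < 0}`, and it carries the two commuting vector fields
`e^{x}(∂_x − ∂_y)` and `e^{x+y}∂_y` to the coordinate vector fields `∂_u` and `∂_v`. -/
theorem canonical_coordinates_sl3_abelian
    (Ψ : (Fin 2 → ℝ) → (Fin 2 → ℝ))
    (hΨ : Ψ = fun p => ![-(Real.exp (-(p 0))), -(Real.exp (-(p 0 + p 1)))])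
    (Q : Set (Fin 2 → ℝ)) (hQ : Q = {w | w 0 < 0 ∧ w 1 < 0}) :
    (∀ p, AnalyticAt ℝ Ψ p) ∧
    Set.BijOn Ψ Set.univ Q ∧
    (∃ Θ : (Fin 2 → ℝ) → (Fin 2 → ℝ),
      (∀ w ∈ Q, AnalyticAt ℝ Θ w) ∧ (∀ p, Θ (Ψ p) = p) ∧ (∀ w ∈ Q, Ψ (Θ w) = w)) ∧
    (∀ p, fderiv ℝ Ψ p (Real.exp (p 0) •
          ((Pi.single 0 (1 : ℝ) : Fin 2 → ℝ) - (Pi.single 1 (1 : ℝ) : Fin 2 → ℝ)))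
        = (Pi.single 0 (1 : ℝ) : Fin 2 → ℝ)) ∧
    (∀ p, fderiv ℝ Ψ p (Real.exp (p 0 + p 1) • (Pi.single 1 (1 : ℝ) : Fin 2 → ℝ))
        = (Pi.single 1 (1 : ℝ) : Fin 2 → ℝ)) := by
  subst hΨ hQ
  set Ψ : (Fin 2 → ℝ) → (Fin 2 → ℝ) :=
    fun p => ![-(Real.exp (-(p 0))), -(Real.exp (-(p 0 + p 1)))] with hΨ
  set Θ : (Fin 2 → ℝ) → (Fin 2 → ℝ) :=
    fun w => ![-(Real.log (-(w 0))), Real.log (-(w 0)) - Real.log (-(w 1))] with hΘ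
  have hΘΨ : ∀ p, Θ (Ψ p) = p := by
    intro p
    funext i
    fin_cases i <;> simp [hΨ, hΘ, Real.log_exp] <;> ring
  have hΨΘ : ∀ w ∈ {w : Fin 2 → ℝ | w 0 < 0 ∧ w 1 < 0}, Ψ (Θ w) = w := by
    rintro w ⟨h0, h1⟩
    have e0 : Real.exp (Real.log (-w 0)) = -w 0 := Real.exp_log (by linarith)
    have e1 : Real.exp (Real.log (-w 1)) = -w 1 := Real.exp_log (by linarith)
    funext i
    fin_cases i
    · show -(Real.exp (-(Θ w 0))) = w 0
      have h : -(Θ w 0) = Real.log (-w 0) := by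
        simp only [hΘ, Matrix.cons_val_zero, neg_neg]
      rw [h, e0]; ring
    · show -(Real.exp (-(Θ w 0 + Θ w 1))) = w 1
      have h : -(Θ w 0 + Θ w 1) = Real.log (-w 1) := by
        simp only [hΘ, Matrix.cons_val_zero, Matrix.cons_val_one, Matrix.head_cons]; ring
      rw [h, e1]; ring
  have hfd : ∀ p, fderiv ℝ Ψ p = Lmap p := fun p => (hasFDerivAt_Psi p).fderiv
  refine ⟨?_, ⟨?_, ?_, ?_⟩, ⟨Θ, ?_, hΘΨ, hΨΘ⟩, ?_, ?_⟩
  · -- analyticity of Ψ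
    intro p
    apply AnalyticAt.pi (f := fun i q => Ψ q i)
    intro i
    fin_cases i
    · have h : AnalyticAt ℝ (fun q : Fin 2 → ℝ => -(q 0)) p :=
        (((ContinuousLinearMap.proj 0 : (Fin 2 → ℝ) →L[ℝ] ℝ)).analyticAt p).neg
      exact (analyticAt_rexp.comp h).neg
    · have h : AnalyticAt ℝ (fun q : Fin 2 → ℝ => -(q 0 + q 1)) p := by
        apply AnalyticAt.neg
        exact (((ContinuousLinearMap.proj 0 : (Fin 2 → ℝ) →L[ℝ] ℝ)).analyticAt p).add
          (((ContinuousLinearMap.proj 1 : (Fin 2 → ℝ) →L[ℝ] ℝ)).analyticAt p)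
      exact (analyticAt_rexp.comp h).neg
  · -- maps to
    intro p _
    constructor <;> simp [hΨ, Real.exp_pos]
  · -- injective
    intro a _ b _ hab
    have := congrArg Θ hab
    rwa [hΘΨ, hΘΨ] at this
  · -- surjective
    intro w hw
    exact ⟨Θ w, Set.mem_univ _, hΨΘ w hw⟩
  · -- analyticity of Θ
    rintro w ⟨h0, h1⟩
    apply AnalyticAt.pi (f := fun i q => Θ q i)
    intro i
    have hp0 : AnalyticAt ℝ (fun q : Fin 2 → ℝ => Real.log (-(q 0))) w :=
      (analyticAt_rlog_aux (by linarith)).comp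
        ((((ContinuousLinearMap.proj 0 : (Fin 2 → ℝ) →L[ℝ] ℝ)).analyticAt w).neg)
    have hp1 : AnalyticAt ℝ (fun q : Fin 2 → ℝ => Real.log (-(q 1))) w :=
      (analyticAt_rlog_aux (by linarith)).comp
        ((((ContinuousLinearMap.proj 1 : (Fin 2 → ℝ) →L[ℝ] ℝ)).analyticAt w).neg)
    fin_cases i
    · exact hp0.neg
    · exact hp0.sub hp1
  · -- first vector field
    intro p
    rw [hfd p]
    funext i
    fin_cases i <;>
      simp [Lmap, Real.exp_neg, Pi.single_apply, ← Real.exp_add] <;> ring_nf <;>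
      simp [← Real.exp_add] <;> ring_nf
  · -- second vector field
    intro p
    rw [hfd p]
    funext i
    fin_cases i <;>
      simp [Lmap, Real.exp_neg, Pi.single_apply, ← Real.exp_add] <;> ring_nf <;>
      simp [← Real.exp_add] <;> ring_nf

end
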